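/- Let n ≥ 1 and let S and S_c be Hermitian complex n×n matrices, and k > 0 a real constant, such that trace(exp(−S/k)) = 1 and trace(exp(−S_c/k)) = 1. Then the real number Re trace(exp(−S/k)·S) is at most Re trace(exp(−S/k)·S_c), and equality holds if and only if S_c = S. -/

import Mathlib

open Matrix NormedSpace

private lemma term_re (d e : ℝ) (w : ℂ) :
    ((d : ℂ) * w * (e : ℂ) * (starRingEnd ℂ) w).re = d * e * Complex.normSq w := by
  rw [show (d:ℂ) * w * (e:ℂ) * (starRingEnd ℂ) w = (d:ℂ)*(e:ℂ)*(w * (starRingEnd ℂ) w) by ring,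
    Complex.mul_conj, ← Complex.ofReal_mul, ← Complex.ofReal_mul, Complex.ofReal_re]

private lemma trace_formula {n : ℕ} (U V : Matrix (Fin n) (Fin n) ℂ) (d e : Fin n → ℝ) :
    (Matrix.trace ((U * diagonal (fun i => (d i : ℂ)) * star U) *
        (V * diagonal (fun j => (e j : ℂ)) * star V))).re
      = ∑ i, ∑ j, d i * e j * Complex.normSq ((star U * V) i j) := by
  have e1 : (U * diagonal (fun i => (d i : ℂ)) * star U) *
        (V * diagonal (fun j => (e j : ℂ)) * star V)
      = U * (diagonal (fun i => (d i : ℂ)) * (star U * V) * diagonal (fun j => (e j : ℂ)) * star V) := by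
    simp only [Matrix.mul_assoc]
  rw [e1, Matrix.trace_mul_comm]
  have e2 : (diagonal (fun i => (d i : ℂ)) * (star U * V) * diagonal (fun j => (e j : ℂ)) * star V) * U
      = diagonal (fun i => (d i : ℂ)) * (star U * V) * diagonal (fun j => (e j : ℂ)) * star (star U * V) := by
    rw [StarMul.star_mul, star_star]
    simp only [Matrix.mul_assoc]
  rw [e2]
  rw [Matrix.trace]
  rw [Complex.re_sum]
  refine Finset.sum_congr rfl fun i _ => ?_
  rw [Matrix.diag_apply, Matrix.mul_apply, Complex.re_sum]
  refine Finset.sum_congr rfl fun j _ => ?_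
  rw [Matrix.mul_diagonal, Matrix.diagonal_mul, Matrix.star_apply]
  exact term_re _ _ _

lemma exp_of_hermitian {n : ℕ} (A : Matrix (Fin n) (Fin n) ℂ) (hA : A.IsHermitian) :
    exp A = (hA.eigenvectorUnitary : Matrix (Fin n) (Fin n) ℂ) *
      diagonal (fun i => (Real.exp (hA.eigenvalues i) : ℂ)) *
      star (hA.eigenvectorUnitary : Matrix (Fin n) (Fin n) ℂ) := by
  set U : Matrix (Fin n) (Fin n) ℂ := (hA.eigenvectorUnitary : Matrix (Fin n) (Fin n) ℂ) with hUdef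
  have hUstar : star U * U = 1 := mem_unitaryGroup_iff'.mp hA.eigenvectorUnitary.2
  have hUU : U * star U = 1 := mem_unitaryGroup_iff.mp hA.eigenvectorUnitary.2
  have hinv : U⁻¹ = star U := inv_eq_left_inv hUstar
  have hU : IsUnit U := ⟨⟨U, star U, hUU, hUstar⟩, rfl⟩
  have hexpd : exp (diagonal (RCLike.ofReal ∘ hA.eigenvalues) : Matrix (Fin n) (Fin n) ℂ)
      = diagonal (fun i => (Real.exp (hA.eigenvalues i) : ℂ)) := by
    rw [Matrix.exp_diagonal]
    funext i j
    rw [Pi.exp_def]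
    simp [← Complex.exp_eq_exp_ℂ, ← Complex.ofReal_exp, Matrix.diagonal]
  calc exp A = exp (U * diagonal (RCLike.ofReal ∘ hA.eigenvalues) * U⁻¹) := by
        rw [hinv]; exact congrArg exp hA.spectral_theorem
    _ = U * exp (diagonal (RCLike.ofReal ∘ hA.eigenvalues)) * U⁻¹ := Matrix.exp_conj U _ hU
    _ = _ := by rw [hexpd, hinv]

private lemma convex_term (x y : ℝ) : 0 ≤ Real.exp x * (x - y) - Real.exp x + Real.exp y := by
  have h := Real.add_one_le_exp (y - x)
  have he : Real.exp y = Real.exp x * Real.exp (y - x) := by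
    rw [← Real.exp_add]; ring_nf
  nlinarith [Real.exp_pos x]

private lemma convex_term_eq (x y : ℝ) (h : Real.exp x * (x - y) - Real.exp x + Real.exp y = 0) :
    x = y := by
  by_contra hne
  have h2 := Real.add_one_lt_exp (x := y - x) (by intro hc; apply hne; linarith)
  have he : Real.exp y = Real.exp x * Real.exp (y - x) := by
    rw [← Real.exp_add]; ring_nf
  nlinarith [Real.exp_pos x]

lemma gibbs_key {n : ℕ} (A B : Matrix (Fin n) (Fin n) ℂ)
    (hA : A.IsHermitian) (hB : B.IsHermitian)
    (htr : (Matrix.trace (exp A)).re = (Matrix.trace (exp B)).re) :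
    (Matrix.trace (exp A * B)).re ≤ (Matrix.trace (exp A * A)).re ∧
      ((Matrix.trace (exp A * B)).re = (Matrix.trace (exp A * A)).re ↔ B = A) := by
  set U : Matrix (Fin n) (Fin n) ℂ := (hA.eigenvectorUnitary : Matrix (Fin n) (Fin n) ℂ) with hUdef
  set V : Matrix (Fin n) (Fin n) ℂ := (hB.eigenvectorUnitary : Matrix (Fin n) (Fin n) ℂ) with hVdef
  set a : Fin n → ℝ := hA.eigenvalues with hadef
  set b : Fin n → ℝ := hB.eigenvalues with hbdef
  have hUstar : star U * U = 1 := mem_unitaryGroup_iff'.mp hA.eigenvectorUnitary.2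
  have hUU : U * star U = 1 := mem_unitaryGroup_iff.mp hA.eigenvectorUnitary.2
  have hVstar : star V * V = 1 := mem_unitaryGroup_iff'.mp hB.eigenvectorUnitary.2
  have hVV : V * star V = 1 := mem_unitaryGroup_iff.mp hB.eigenvectorUnitary.2
  have hAspec : A = U * diagonal (fun i => (a i : ℂ)) * star U := hA.spectral_theorem
  have hBspec : B = V * diagonal (fun j => (b j : ℂ)) * star V := hB.spectral_theorem
  set W : Matrix (Fin n) (Fin n) ℂ := star U * V with hWdef
  set P : Fin n → Fin n → ℝ := fun i j => Complex.normSq (W i j) with hPdef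
  -- unitarity of W
  have hWW : W * star W = 1 := by
    rw [hWdef, StarMul.star_mul, star_star]
    calc star U * V * (star V * U) = star U * (V * star V) * U := by
          simp only [Matrix.mul_assoc]
      _ = 1 := by rw [hVV, Matrix.mul_one, hUstar]
  have hWsW : star W * W = 1 := by
    rw [hWdef, StarMul.star_mul, star_star]
    calc star V * U * (star U * V) = star V * (U * star U) * V := by
          simp only [Matrix.mul_assoc]
      _ = 1 := by rw [hUU, Matrix.mul_one, hVstar]
  have hPnn : ∀ i j, 0 ≤ P i j := fun i j => Complex.normSq_nonneg _
  have hrow : ∀ i, ∑ j, P i j = 1 := by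
    intro i
    have := congrArg (fun M => (M i i).re) hWW
    simpa [Matrix.mul_apply, Matrix.one_apply, Matrix.star_apply, Complex.re_sum,
      Complex.mul_conj, hPdef] using this
  have hcol : ∀ j, ∑ i, P i j = 1 := by
    intro j
    have := congrArg (fun M => (M j j).re) hWsW
    simpa [Matrix.mul_apply, Matrix.one_apply, Matrix.star_apply, Complex.re_sum,
      Complex.mul_conj, hPdef, mul_comm] using this
  -- traces of exponentials
  have hexpA : exp A = U * diagonal (fun i => (Real.exp (a i) : ℂ)) * star U :=
    exp_of_hermitian A hA
  have hexpB : exp B = V * diagonal (fun j => (Real.exp (b j) : ℂ)) * star V :=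
    exp_of_hermitian B hB
  have htrA : (Matrix.trace (exp A)).re = ∑ i, Real.exp (a i) := by
    rw [hexpA, Matrix.trace_mul_cycle, hUstar, Matrix.one_mul, Matrix.trace_diagonal,
      Complex.re_sum]
    simp [Complex.exp_ofReal_re]
  have htrB : (Matrix.trace (exp B)).re = ∑ j, Real.exp (b j) := by
    rw [hexpB, Matrix.trace_mul_cycle, hVstar, Matrix.one_mul, Matrix.trace_diagonal,
      Complex.re_sum]
    simp [Complex.exp_ofReal_re]
  -- the two main trace quantities
  have hTB : (Matrix.trace (exp A * B)).re = ∑ i, ∑ j, Real.exp (a i) * b j * P i j := by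
    rw [hexpA]
    conv_lhs => rw [hBspec]
    exact trace_formula U V (fun i => Real.exp (a i)) b
  have hTA : (Matrix.trace (exp A * A)).re = ∑ i, Real.exp (a i) * a i := by
    rw [hexpA]
    conv_lhs => rw [hAspec]
    rw [trace_formula U U (fun i => Real.exp (a i)) a]
    rw [hUstar]
    refine Finset.sum_congr rfl fun i _ => ?_
    rw [Finset.sum_eq_single i]
    · simp [Matrix.one_apply]
    · intro j _ hj
      simp [Matrix.one_apply, Ne.symm hj]
    · simp
  -- the relative-entropy sum
  set F : ℝ := ∑ i, ∑ j, P i j * (Real.exp (a i) * (a i - b j) - Real.exp (a i) + Real.exp (b j))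
    with hFdef
  have h1 : ∑ i, ∑ j, Real.exp (a i) * a i * P i j = ∑ i, Real.exp (a i) * a i := by
    refine Finset.sum_congr rfl fun i _ => ?_
    rw [← Finset.mul_sum, hrow i, mul_one]
  have h2 : ∑ i, ∑ j, Real.exp (a i) * P i j = ∑ i, Real.exp (a i) := by
    refine Finset.sum_congr rfl fun i _ => ?_
    rw [← Finset.mul_sum, hrow i, mul_one]
  have h3 : ∑ i, ∑ j, Real.exp (b j) * P i j = ∑ j, Real.exp (b j) := by
    rw [Finset.sum_comm]
    refine Finset.sum_congr rfl fun j _ => ?_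
    rw [← Finset.mul_sum, hcol j, mul_one]
  have hFeq : F = (Matrix.trace (exp A * A)).re - (Matrix.trace (exp A * B)).re := by
    have hsplit : F = (∑ i, ∑ j, Real.exp (a i) * a i * P i j)
        - (∑ i, ∑ j, Real.exp (a i) * b j * P i j)
        - (∑ i, ∑ j, Real.exp (a i) * P i j)
        + (∑ i, ∑ j, Real.exp (b j) * P i j) := by
      rw [hFdef, ← Finset.sum_sub_distrib, ← Finset.sum_sub_distrib, ← Finset.sum_add_distrib]
      refine Finset.sum_congr rfl fun i _ => ?_
      rw [← Finset.sum_sub_distrib, ← Finset.sum_sub_distrib, ← Finset.sum_add_distrib]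
      refine Finset.sum_congr rfl fun j _ => ?_
      ring
    rw [hsplit, h1, h2, h3, hTA, hTB]
    rw [← htrA, ← htrB, htr]
    ring
  have hFnn : 0 ≤ F := Finset.sum_nonneg fun i _ => Finset.sum_nonneg fun j _ =>
    mul_nonneg (hPnn i j) (convex_term (a i) (b j))
  refine ⟨by linarith, ?_, fun h => by rw [h]⟩
  intro heq
  have hF0 : F = 0 := by rw [hFeq, heq, sub_self]
  have hterm : ∀ i ∈ Finset.univ, ∀ j ∈ Finset.univ,
      P i j * (Real.exp (a i) * (a i - b j) - Real.exp (a i) + Real.exp (b j)) = 0 := by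
    intro i hi j hj
    have h := (Finset.sum_eq_zero_iff_of_nonneg (fun i _ => Finset.sum_nonneg fun j _ =>
      mul_nonneg (hPnn i j) (convex_term (a i) (b j)))).mp hF0 i hi
    exact (Finset.sum_eq_zero_iff_of_nonneg (fun j _ =>
      mul_nonneg (hPnn i j) (convex_term (a i) (b j)))).mp h j hj
  have hab : ∀ i j, W i j = 0 ∨ a i = b j := by
    intro i j
    rcases mul_eq_zero.mp (hterm i (Finset.mem_univ i) j (Finset.mem_univ j)) with h | h
    · exact Or.inl (Complex.normSq_eq_zero.mp h)
    · exact Or.inr (convex_term_eq _ _ h)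
  have hDW : diagonal (fun i => (a i : ℂ)) * W = W * diagonal (fun j => (b j : ℂ)) := by
    ext i j
    rw [Matrix.diagonal_mul, Matrix.mul_diagonal]
    rcases hab i j with h | h
    · rw [h, mul_zero, zero_mul]
    · rw [h, mul_comm]
  have hAV : A * V = B * V := by
    have e1 : A * V = U * (diagonal (fun i => (a i : ℂ)) * W) := by
      rw [hAspec, hWdef]
      simp only [Matrix.mul_assoc]
    have e2 : B * V = V * diagonal (fun j => (b j : ℂ)) := by
      rw [hBspec]
      calc V * diagonal (fun j => (b j : ℂ)) * star V * V
          = V * diagonal (fun j => (b j : ℂ)) * (star V * V) := by simp only [Matrix.mul_assoc]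
        _ = _ := by rw [hVstar, Matrix.mul_one]
    rw [e1, hDW, e2, hWdef]
    calc U * (star U * V * diagonal (fun j => (b j : ℂ)))
        = (U * star U) * (V * diagonal (fun j => (b j : ℂ))) := by simp only [Matrix.mul_assoc]
      _ = _ := by rw [hUU, Matrix.one_mul]
  have hABeq : A = B := by
    calc A = A * (V * star V) := by rw [hVV, Matrix.mul_one]
      _ = A * V * star V := by simp only [Matrix.mul_assoc]
      _ = B * V * star V := by rw [hAV]
      _ = B * (V * star V) := by simp only [Matrix.mul_assoc]
      _ = B := by rw [hVV, Matrix.mul_one]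
  exact hABeq.symm

private lemma herm_aux {n : ℕ} (k : ℝ) (S : Matrix (Fin n) (Fin n) ℂ) (hS : S.IsHermitian) :
    (-(k⁻¹ • S)).IsHermitian := by
  rw [Matrix.IsHermitian, Matrix.conjTranspose_neg, Matrix.conjTranspose_smul, star_trivial,
    hS.eq]

/-- In the matrix model, the value `⟨S⟩ = Re tr(exp(-S/k)·S)` of the entropy `S`
of a Gibbs state is at most the value `⟨S_c⟩ = Re tr(exp(-S/k)·S_c)` of any other entropy
`S_c`, with equality iff `S_c = S`. -/
theorem gibbs_state_entropy_minimal
    {n : ℕ} (hn : 1 ≤ n) (k : ℝ) (hk : 0 < k)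
    (S Sc : Matrix (Fin n) (Fin n) ℂ)
    (hS : S.IsHermitian) (hSc : Sc.IsHermitian)
    (hS1 : (Matrix.trace (NormedSpace.exp (-(k⁻¹ • S)))).re = 1)
    (hSc1 : (Matrix.trace (NormedSpace.exp (-(k⁻¹ • Sc)))).re = 1) :
    (Matrix.trace (NormedSpace.exp (-(k⁻¹ • S)) * S)).re
        ≤ (Matrix.trace (NormedSpace.exp (-(k⁻¹ • S)) * Sc)).re ∧
      ((Matrix.trace (NormedSpace.exp (-(k⁻¹ • S)) * S)).re
          = (Matrix.trace (NormedSpace.exp (-(k⁻¹ • S)) * Sc)).re ↔ Sc = S) := by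
  set A : Matrix (Fin n) (Fin n) ℂ := -(k⁻¹ • S) with hAdef
  set B : Matrix (Fin n) (Fin n) ℂ := -(k⁻¹ • Sc) with hBdef
  have hAh : A.IsHermitian := herm_aux k S hS
  have hBh : B.IsHermitian := herm_aux k Sc hSc
  have key := gibbs_key A B hAh hBh (hS1.trans hSc1.symm)
  have hSA : S = (-k) • A := by
    rw [hAdef, smul_neg, ← neg_smul, neg_neg, smul_smul, mul_inv_cancel₀ hk.ne', one_smul]
  have hScB : Sc = (-k) • B := by
    rw [hBdef, smul_neg, ← neg_smul, neg_neg, smul_smul, mul_inv_cancel₀ hk.ne', one_smul]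
  have hre : ∀ M N : Matrix (Fin n) (Fin n) ℂ,
      (Matrix.trace (M * ((-k) • N))).re = -k * (Matrix.trace (M * N)).re := by
    intro M N
    rw [Matrix.mul_smul, Matrix.trace_smul, Complex.smul_re, smul_eq_mul]
  have e1 : (Matrix.trace (NormedSpace.exp A * S)).re
      = -k * (Matrix.trace (NormedSpace.exp A * A)).re := by
    conv_lhs => rw [hSA]
    exact hre _ _
  have e2 : (Matrix.trace (NormedSpace.exp A * Sc)).re
      = -k * (Matrix.trace (NormedSpace.exp A * B)).re := by
    conv_lhs => rw [hScB]
    exact hre _ _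
  have hBA : B = A ↔ Sc = S := by
    constructor
    · intro h
      rw [hSA, hScB, h]
    · intro h
      rw [hAdef, hBdef, h]
  refine ⟨?_, ?_⟩
  · rw [e1, e2]
    nlinarith [key.1]
  · rw [e1, e2, ← hBA, ← key.2]
    constructor
    · intro h
      have := mul_left_cancel₀ (neg_ne_zero.mpr hk.ne') h
      linarith
    · intro h
      rw [h]
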